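/- Let h : ℝ → ℝ satisfy h(0) = 0 and suppose G(x,y) = h(x+y) − h(x) − h(y) defines a continuous function on ℝ². Let δ ∈ (0, 1/2) be rational, M ≥ 1, and let x be a rational number such that x and x + δ both belong to [−M, M]. Then |h(x+δ) − h(x)| ≤ 2δ·|h(1)| + 3·ω(G; δ; [−M,M]²). -/

import Mathlib

/-- Modulus of continuity of `F : ℝ² → ℝ` on `Ω` with increment `δ`
(Euclidean distance on `ℝ²`). -/
noncomputable def omega2 (F : ℝ × ℝ → ℝ) (δ : ℝ) (Ω : Set (ℝ × ℝ)) : ℝ :=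
  sSup {d : ℝ | ∃ p ∈ Ω, ∃ q ∈ Ω,
    Real.sqrt ((p.1 - q.1) ^ 2 + (p.2 - q.2) ^ 2) ≤ δ ∧ d = |F p - F q|}

/-- Let `h(0) = 0` and `G(x,y) = h(x+y) - h(x) - h(y)` be continuous on `ℝ²`.
For rational `δ ∈ (0, 1/2)`, `M ≥ 1`, and rational `x` with `x, x + δ ∈ [-M, M]`:
`|h(x+δ) - h(x)| ≤ 2δ|h(1)| + 3·ω(G; δ; [-M,M]²)`. -/
theorem stmt_7 (h : ℝ → ℝ) (h0 : h 0 = 0)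
    (hG : Continuous (fun q : ℝ × ℝ => h (q.1 + q.2) - h q.1 - h q.2))
    (δ : ℚ) (hδ0 : 0 < δ) (hδ : (δ : ℝ) < 1 / 2) (M : ℝ) (hM : 1 ≤ M)
    (x : ℚ) (hx : (x : ℝ) ∈ Set.Icc (-M) M)
    (hxδ : (x : ℝ) + (δ : ℝ) ∈ Set.Icc (-M) M) :
    |h ((x : ℝ) + (δ : ℝ)) - h (x : ℝ)| ≤ 2 * (δ : ℝ) * |h 1|
      + 3 * omega2 (fun q : ℝ × ℝ => h (q.1 + q.2) - h q.1 - h q.2) (δ : ℝ)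
          (Set.Icc (-M) M ×ˢ Set.Icc (-M) M) := by
  set F : ℝ × ℝ → ℝ := fun q : ℝ × ℝ => h (q.1 + q.2) - h q.1 - h q.2 with hFdef
  set Ω : Set (ℝ × ℝ) := Set.Icc (-M) M ×ˢ Set.Icc (-M) M with hΩdef
  set S : Set ℝ := {d : ℝ | ∃ p ∈ Ω, ∃ q ∈ Ω,
    Real.sqrt ((p.1 - q.1) ^ 2 + (p.2 - q.2) ^ 2) ≤ (δ:ℝ) ∧ d = |F p - F q|} with hSdef
  have hωdef : omega2 F (δ:ℝ) Ω = sSup S := rfl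
  set ω : ℝ := sSup S with hωS
  have hδ0' : (0:ℝ) < (δ:ℝ) := by exact_mod_cast hδ0
  have hδM : (δ:ℝ) ≤ M := by linarith
  -- boundedness of S
  obtain ⟨C, hC⟩ : ∃ C, ∀ z ∈ Ω, ‖F z‖ ≤ C :=
    (isCompact_Icc.prod isCompact_Icc).exists_bound_of_continuousOn hG.continuousOn
  have hBdd : BddAbove S := by
    refine ⟨C + C, ?_⟩
    rintro d ⟨P, hP, Q, hQ, -, rfl⟩
    calc |F P - F Q| ≤ |F P| + |F Q| := abs_sub _ _
      _ ≤ C + C := add_le_add (hC P hP) (hC Q hQ)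
  have h0Icc : (0:ℝ) ∈ Set.Icc (-M) M := ⟨by linarith, by linarith⟩
  have hω0 : 0 ≤ ω := by
    refine le_csSup hBdd ?_
    exact ⟨(0,0), ⟨h0Icc, h0Icc⟩, (0,0), ⟨h0Icc, h0Icc⟩,
      by simp [le_of_lt hδ0'], by simp⟩
  -- vertical bound: |G(a,b)| ≤ ω when 0 ≤ b ≤ δ
  have vert : ∀ a b : ℝ, a ∈ Set.Icc (-M) M → 0 ≤ b → b ≤ (δ:ℝ) →
      |h (a + b) - h a - h b| ≤ ω := by
    intro a b ha hb0 hbδ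
    have hbM : b ∈ Set.Icc (-M) M := ⟨by linarith, by linarith⟩
    have hF0 : F (a, 0) = 0 := by simp [hFdef, h0]
    have hsqrt : Real.sqrt ((a - a) ^ 2 + (b - 0) ^ 2) ≤ (δ:ℝ) := by
      rw [sub_self, sub_zero]
      simpa [Real.sqrt_sq hb0] using hbδ
    refine le_csSup hBdd ?_
    refine ⟨(a, b), ⟨ha, hbM⟩, (a, 0), ⟨ha, h0Icc⟩, hsqrt, ?_⟩
    simp [hF0, hFdef, h0]
  -- set up p, q
  set qn : ℕ := δ.den with hqn
  set p : ℕ := δ.num.toNat with hp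
  have hqn0 : (0:ℝ) < (qn:ℝ) := by exact_mod_cast δ.pos
  have hcast : (δ:ℝ) = (p:ℝ) / (qn:ℝ) := by
    have hnum : ((p:ℕ):ℝ) = ((δ.num:ℤ):ℝ) := by
      rw [hp]; exact_mod_cast Int.toNat_of_nonneg (le_of_lt (Rat.num_pos.mpr hδ0))
    rw [Rat.cast_def, hnum, hqn]
  have hpq : (p:ℝ) < (qn:ℝ) := by
    have : (p:ℝ) / (qn:ℝ) < 1 := by rw [← hcast]; linarith
    exact (div_lt_one hqn0).mp this
  have hpqn : p ≤ qn := by exact_mod_cast le_of_lt hpq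
  have hp1 : 0 < p := by
    have hnum := Rat.num_pos.mpr hδ0
    omega
  set f : ℕ → ℝ := fun n => h ((n:ℝ) / (qn:ℝ)) with hf
  have hf0 : f 0 = 0 := by simp [hf, h0]
  -- key step bound
  have hg : ∀ m n : ℕ, 0 < n → n ≤ p → m + n ≤ qn →
      |f (m + n) - f m - f n| ≤ ω := by
    intro m n hn hnp hmn
    have hm1 : (m:ℝ) / qn ≤ 1 := by
      rw [div_le_one hqn0]
      exact_mod_cast le_trans (Nat.le_add_right m n) hmn
    have hm0 : (0:ℝ) ≤ (m:ℝ) / qn := by positivity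
    have hmIcc : (m:ℝ) / qn ∈ Set.Icc (-M) M := ⟨by linarith, by linarith⟩
    have hn0 : (0:ℝ) ≤ (n:ℝ) / qn := by positivity
    have hnδ : (n:ℝ) / qn ≤ (δ:ℝ) := by
      have hnp' : (n:ℝ) ≤ (p:ℝ) := by exact_mod_cast hnp
      rw [hcast]
      gcongr
    have := vert ((m:ℝ)/qn) ((n:ℝ)/qn) hmIcc hn0 hnδ
    simpa [hf, add_div] using this
  -- main induction (Euclid-style)
  have main : ∀ a : ℕ, ∀ b : ℕ, a ≤ p → a ≤ b → b ≤ qn →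
      |(b:ℝ) * f a - (a:ℝ) * f b| ≤ ((a:ℝ) + (b:ℝ)) * ω := by
    intro a
    induction a using Nat.strong_induction_on with
    | _ a IH =>
      intro b hap hab hbq
      rcases Nat.eq_zero_or_pos a with rfl | ha
      · simp only [hf0, Nat.cast_zero, mul_zero, zero_mul, sub_zero, abs_zero]
        positivity
      · set c : ℕ := b / a with hcdef
        set r : ℕ := b % a with hrdef
        have hb : c * a + r = b := by rw [hcdef, hrdef, mul_comm]; exact Nat.div_add_mod b a
        have hra : r < a := Nat.mod_lt b ha
        -- inner induction: |f (c*a + r) - (c * f a + f r)| ≤ c * ω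
        have D : ∀ c' : ℕ, c' * a + r ≤ qn →
            |f (c' * a + r) - ((c':ℝ) * f a + f r)| ≤ (c':ℝ) * ω := by
          intro c'
          induction c' with
          | zero => intro _; simp
          | succ c'' IHc =>
            intro hle
            have heq : (c'' + 1) * a + r = (c'' * a + r) + a := by ring
            have hle' : c'' * a + r ≤ qn := by omega
            have hstep := hg (c'' * a + r) a ha hap (by omega)
            have hprev := IHc hle'
            have hdecomp : f ((c'' + 1) * a + r) - (((c''+1:ℕ):ℝ) * f a + f r)
                = (f ((c'' * a + r) + a) - f (c'' * a + r) - f a)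
                  + (f (c'' * a + r) - ((c'':ℝ) * f a + f r)) := by
              rw [heq]; push_cast; ring
            rw [hdecomp]
            calc |_ + _| ≤ _ + _ := abs_add_le _ _
              _ ≤ ω + (c'':ℝ) * ω := add_le_add hstep hprev
              _ = ((c''+1:ℕ):ℝ) * ω := by push_cast; ring
        have hcqn : c * a + r ≤ qn := by omega
        have e2 := D c hcqn
        rw [hb] at e2
        have e1 := IH r hra a (by omega) (le_of_lt hra) (by omega)
        have hbcast : (b:ℝ) = (c:ℝ) * (a:ℝ) + (r:ℝ) := by exact_mod_cast hb.symm
        have identity : (b:ℝ) * f a - (a:ℝ) * f b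
            = (a:ℝ) * ((((c:ℝ) * f a + f r)) - f b) + ((r:ℝ) * f a - (a:ℝ) * f r) := by
          rw [hbcast]; ring
        rw [identity]
        have t1 : |(a:ℝ) * (((c:ℝ) * f a + f r) - f b)| ≤ (a:ℝ) * ((c:ℝ) * ω) := by
          rw [abs_mul, abs_of_nonneg (by positivity : (0:ℝ) ≤ (a:ℝ))]
          refine mul_le_mul_of_nonneg_left ?_ (by positivity)
          rw [abs_sub_comm]; exact e2
        have t2 : |(r:ℝ) * f a - (a:ℝ) * f r| ≤ ((r:ℝ) + (a:ℝ)) * ω := by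
          rw [abs_sub_comm]
          simpa using e1
        calc |_ + _| ≤ _ + _ := abs_add_le _ _
          _ ≤ (a:ℝ) * ((c:ℝ) * ω) + ((r:ℝ) + (a:ℝ)) * ω := add_le_add t1 t2
          _ = ((a:ℝ) + ((c:ℝ) * (a:ℝ) + (r:ℝ))) * ω := by ring
          _ = ((a:ℝ) + (b:ℝ)) * ω := by rw [← hbcast]
  -- apply with a = p, b = qn
  have hfp : f p = h (δ:ℝ) := by rw [hf]; simp only []; rw [← hcast]
  have hfq : f qn = h 1 := by
    rw [hf]; simp only []; rw [div_self (ne_of_gt hqn0)]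
  have mq := main p qn le_rfl hpqn le_rfl
  rw [hfp, hfq] at mq
  -- |h δ - δ h 1| ≤ 2 ω
  have hhd : |h (δ:ℝ) - (δ:ℝ) * h 1| ≤ 2 * ω := by
    have e : h (δ:ℝ) - (δ:ℝ) * h 1 = ((qn:ℝ) * h (δ:ℝ) - (p:ℝ) * h 1) / qn := by
      rw [hcast]; field_simp
    rw [e, abs_div, abs_of_pos hqn0, div_le_iff₀ hqn0]
    calc |(qn:ℝ) * h (δ:ℝ) - (p:ℝ) * h 1| ≤ ((p:ℝ) + (qn:ℝ)) * ω := mq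
      _ ≤ 2 * ω * qn := by nlinarith
  -- final assembly
  have hx1 := vert (x:ℝ) (δ:ℝ) hx (le_of_lt hδ0') le_rfl
  rw [hωdef]
  have key : |h ((x:ℝ) + (δ:ℝ)) - h (x:ℝ)|
      ≤ |h ((x:ℝ) + (δ:ℝ)) - h (x:ℝ) - h (δ:ℝ)| + |h (δ:ℝ) - (δ:ℝ) * h 1|
        + |(δ:ℝ) * h 1| := by
    have e : h ((x:ℝ) + (δ:ℝ)) - h (x:ℝ)
        = (h ((x:ℝ) + (δ:ℝ)) - h (x:ℝ) - h (δ:ℝ)) + (h (δ:ℝ) - (δ:ℝ) * h 1)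
          + (δ:ℝ) * h 1 := by ring
    conv_lhs => rw [e]
    exact (abs_add_le _ _).trans (add_le_add_left (abs_add_le _ _) _)
  have hmul : |(δ:ℝ) * h 1| = (δ:ℝ) * |h 1| := by rw [abs_mul, abs_of_pos hδ0']
  rw [hmul] at key
  have hpos : 0 ≤ (δ:ℝ) * |h 1| := by positivity
  linarith
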